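/- Let 1 < q < 2, let X be a compact subset of ℂ, let x₀ ∈ ℂ, let k : ℂ → ℂ vanish off X and belong to L^q(X, dA), and let δ > 0. Let E_δ = {x ∈ ℂ : ∫_X |x − x₀|^q |k(z)|^q / |z − x|^q dm_z < δ}. Then E_δ has full area density at x₀. -/

import Mathlib

open MeasureTheory Metric Filter
open scoped ENNReal NNReal

noncomputable section

/-- `E` has full area density at `w` if `m(B(w,1/n) \ E) / m(B(w,1/n)) → 0` as `n → ∞`,
where `m` is 2-dimensional Lebesgue (area) measure. -/
def FullAreaDensityAt (E : Set ℂ) (w : ℂ) : Prop :=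
  Tendsto (fun n : ℕ => volume (ball w (1 / (n : ℝ)) \ E) / volume (ball w (1 / (n : ℝ))))
    atTop (nhds 0)

lemma pot_bound {q : ℝ} (hq0 : 0 < q) (hq2 : q < 2) (w : ℂ) {c : ℝ} (hc : 0 < c) :
    ∫⁻ x in ball w c, (ENNReal.ofReal (‖w - x‖ ^ q))⁻¹
      ≤ ENNReal.ofReal (Real.pi * 2 ^ q / (1 - 2 ^ (q - 2)) * c ^ (2 - q)) := by
  set ρ : ℝ := 2 ^ (q - 2) with hρ
  have hρ0 : 0 < ρ := Real.rpow_pos_of_pos two_pos _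
  have hρ1 : ρ < 1 := by
    rw [hρ]
    calc (2:ℝ) ^ (q - 2) < 2 ^ (0:ℝ) := by
          apply Real.rpow_lt_rpow_left_iff (x := 2) (by norm_num) |>.2; linarith
      _ = 1 := Real.rpow_zero 2
  set A : ℕ → Set ℂ := fun n => ball w (c * 2 ^ (-(n:ℝ))) \ ball w (c * 2 ^ (-(n:ℝ) - 1)) with hA
  have hcover : ball w c \ {w} ⊆ ⋃ n, A n := by
    intro x hx
    obtain ⟨hx1, hx2⟩ := hx
    have hd : 0 < dist x w := by
      simp only [Set.mem_singleton_iff] at hx2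
      exact dist_pos.2 hx2
    have hex : ∃ n : ℕ, c * 2 ^ (-(n:ℝ) - 1) ≤ dist x w := by
      have : Tendsto (fun n : ℕ => c * 2 ^ (-(n:ℝ) - 1)) atTop (nhds 0) := by
        rw [show (0:ℝ) = c * 0 by ring]
        apply Tendsto.const_mul
        have : Tendsto (fun n : ℕ => -(n:ℝ) - 1) atTop atBot := by
          apply Filter.tendsto_atBot_add_const_right
          exact tendsto_neg_atBot_iff.2 tendsto_natCast_atTop_atTop
        exact (tendsto_rpow_atBot_of_base_gt_one 2 (by norm_num)).comp this
      rcases (this.eventually (eventually_lt_nhds hd)).exists with ⟨n, hn⟩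
      exact ⟨n, hn.le⟩
    classical
    set n := Nat.find hex with hn
    have h1 : c * 2 ^ (-(n:ℝ) - 1) ≤ dist x w := Nat.find_spec hex
    refine Set.mem_iUnion.2 ⟨n, ?_, ?_⟩
    · rcases Nat.eq_zero_or_pos n with h | h
      · simp only [mem_ball, h]
        simpa using hx1
      · have := Nat.find_min hex (m := n - 1) (by omega)
        push_neg at this
        have hcast : (↑(n-1):ℝ) = (n:ℝ) - 1 := by
          have : (1:ℕ) ≤ n := h
          push_cast [this]; ring
        rw [mem_ball]
        calc dist x w < c * 2 ^ (-(↑(n-1):ℝ) - 1) := this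
          _ = c * 2 ^ (-(n:ℝ)) := by rw [hcast]; ring_nf
    · simp only [mem_ball, not_lt]
      exact h1
  have h2 : (0:ℝ) < 2 := two_pos
  have hpi : ((NNReal.pi : ℝ≥0∞)) = ENNReal.ofReal Real.pi := by
    rw [← ENNReal.ofReal_coe_nnreal, NNReal.coe_real_pi]
  have hterm : ∀ n : ℕ, (∫⁻ x in A n, (ENNReal.ofReal (‖w - x‖ ^ q))⁻¹)
      ≤ ENNReal.ofReal (Real.pi * 2 ^ q * c ^ (2 - q)) * (ENNReal.ofReal ρ) ^ n := by
    intro n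
    have hr1 : (0:ℝ) < c * 2 ^ (-(n:ℝ) - 1) := by positivity
    have hd1 : (0:ℝ) < (c * 2 ^ (-(n:ℝ) - 1)) ^ q := Real.rpow_pos_of_pos hr1 q
    have step1 : (∫⁻ x in A n, (ENNReal.ofReal (‖w - x‖ ^ q))⁻¹)
        ≤ (ENNReal.ofReal ((c * 2 ^ (-(n:ℝ) - 1)) ^ q))⁻¹ * volume (A n) := by
      rw [← setLIntegral_const]
      apply setLIntegral_mono measurable_const
      intro x hx
      have hx2 : x ∉ ball w (c * 2 ^ (-(n:ℝ) - 1)) := hx.2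
      have : c * 2 ^ (-(n:ℝ) - 1) ≤ ‖w - x‖ := by
        rw [norm_sub_rev, ← dist_eq_norm]
        simpa [mem_ball, not_lt] using hx2
      exact ENNReal.inv_le_inv' (ENNReal.ofReal_le_ofReal
        (Real.rpow_le_rpow hr1.le this hq0.le))
    have step2 : volume (A n) ≤ ENNReal.ofReal ((c * 2 ^ (-(n:ℝ)))^2 * Real.pi) := by
      calc volume (A n) ≤ volume (ball w (c * 2 ^ (-(n:ℝ)))) :=
            measure_mono Set.diff_subset
        _ = ENNReal.ofReal (c * 2 ^ (-(n:ℝ))) ^ 2 * NNReal.pi := Complex.volume_ball _ _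
        _ = ENNReal.ofReal ((c * 2 ^ (-(n:ℝ)))^2 * Real.pi) := by
            rw [hpi, ← ENNReal.ofReal_pow (by positivity), ← ENNReal.ofReal_mul (by positivity)]
    have key : ((c * 2 ^ (-(n:ℝ) - 1)) ^ q)⁻¹ * ((c * 2 ^ (-(n:ℝ)))^2 * Real.pi)
        = Real.pi * 2 ^ q * c ^ (2 - q) * ρ ^ n := by
      have e1 : ((c * 2 ^ (-(n:ℝ) - 1)) ^ q) = c ^ q * 2 ^ ((-(n:ℝ) - 1) * q) := by
        rw [Real.mul_rpow hc.le (Real.rpow_nonneg h2.le _), ← Real.rpow_mul h2.le]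
      have e2 : ((c * 2 ^ (-(n:ℝ))) ^ 2 : ℝ) = c ^ (2:ℝ) * 2 ^ (-(n:ℝ) * 2) := by
        rw [mul_pow, ← Real.rpow_natCast c 2, ← Real.rpow_natCast ((2:ℝ) ^ (-(n:ℝ))) 2,
          ← Real.rpow_mul h2.le]
        norm_num
      have e3 : ρ ^ n = 2 ^ ((q - 2) * n) := by
        rw [hρ, ← Real.rpow_natCast ((2:ℝ) ^ (q-2)) n, ← Real.rpow_mul h2.le]
      rw [e1, e2, e3, mul_inv, ← Real.rpow_neg hc.le, ← Real.rpow_neg h2.le]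
      calc c ^ (-q) * 2 ^ (-((-(n:ℝ) - 1) * q)) * (c ^ (2:ℝ) * 2 ^ (-(n:ℝ) * 2) * Real.pi)
          = (c ^ (-q) * c ^ (2:ℝ)) * (2 ^ (-((-(n:ℝ) - 1) * q)) * 2 ^ (-(n:ℝ) * 2)) * Real.pi := by
            ring
        _ = c ^ (-q + 2) * 2 ^ (-((-(n:ℝ)-1)*q) + -(n:ℝ)*2) * Real.pi := by
            rw [Real.rpow_add hc, Real.rpow_add h2]
        _ = Real.pi * 2 ^ q * c ^ (2-q) * 2 ^ ((q-2)*n) := by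
            rw [show -q + 2 = 2 - q by ring, show -((-(n:ℝ)-1)*q) + -(n:ℝ)*2 = q + (q-2)*n by ring,
              Real.rpow_add h2]
            ring
    calc (∫⁻ x in A n, (ENNReal.ofReal (‖w - x‖ ^ q))⁻¹)
        ≤ (ENNReal.ofReal ((c * 2 ^ (-(n:ℝ) - 1)) ^ q))⁻¹
            * ENNReal.ofReal ((c * 2 ^ (-(n:ℝ)))^2 * Real.pi) :=
          step1.trans (mul_le_mul_right step2 _)
      _ = ENNReal.ofReal (((c * 2 ^ (-(n:ℝ) - 1)) ^ q)⁻¹ * ((c * 2 ^ (-(n:ℝ)))^2 * Real.pi)) := by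
          rw [← ENNReal.ofReal_inv_of_pos hd1, ← ENNReal.ofReal_mul (by positivity)]
      _ = ENNReal.ofReal (Real.pi * 2 ^ q * c ^ (2 - q) * ρ ^ n) := by rw [key]
      _ = ENNReal.ofReal (Real.pi * 2 ^ q * c ^ (2 - q)) * (ENNReal.ofReal ρ) ^ n := by
          rw [ENNReal.ofReal_mul (by positivity), ENNReal.ofReal_pow hρ0.le]
  have hsing : (ball w c : Set ℂ) =ᵐ[volume] (ball w c \ {w} : Set ℂ) := by
    refine (diff_ae_eq_self.2 (measure_mono_null ?_ (measure_singleton w))).symm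
    first
      | exact Set.inter_subset_left
      | exact Set.inter_subset_right
  calc ∫⁻ x in ball w c, (ENNReal.ofReal (‖w - x‖ ^ q))⁻¹
      = ∫⁻ x in ball w c \ {w}, (ENNReal.ofReal (‖w - x‖ ^ q))⁻¹ := setLIntegral_congr hsing
    _ ≤ ∫⁻ x in ⋃ n, A n, (ENNReal.ofReal (‖w - x‖ ^ q))⁻¹ := lintegral_mono_set hcover
    _ ≤ ∑' n, ∫⁻ x in A n, (ENNReal.ofReal (‖w - x‖ ^ q))⁻¹ := lintegral_iUnion_le _ _
    _ ≤ ∑' n, ENNReal.ofReal (Real.pi * 2 ^ q * c ^ (2 - q)) * (ENNReal.ofReal ρ) ^ n :=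
        ENNReal.tsum_le_tsum hterm
    _ = ENNReal.ofReal (Real.pi * 2 ^ q * c ^ (2 - q)) * (1 - ENNReal.ofReal ρ)⁻¹ := by
        rw [ENNReal.tsum_mul_left, ENNReal.tsum_geometric]
    _ = ENNReal.ofReal (Real.pi * 2 ^ q / (1 - 2 ^ (q - 2)) * c ^ (2 - q)) := by
        rw [show (1:ℝ≥0∞) = ENNReal.ofReal 1 by simp, ← ENNReal.ofReal_sub _ hρ0.le,
          ← ENNReal.ofReal_inv_of_pos (by linarith), ← ENNReal.ofReal_mul (by positivity)]
        congr 1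
        rw [hρ]
        field_simp

/-- For `1 < q < 2`, `k ∈ L^q(X, dA)` vanishing off the compact set `X`, and `δ > 0`, the
set `E_δ = {x : ∫_X |x-x₀|^q |k(z)|^q / |z-x|^q dm_z < δ}` has full area density at `x₀`. -/
theorem sublevel_set_full_density
    (q : ℝ) (hq1 : 1 < q) (hq2 : q < 2) (X : Set ℂ) (hX : IsCompact X)
    (x₀ : ℂ) (k : ℂ → ℂ) (hk0 : ∀ z ∉ X, k z = 0)
    (hkLq : MemLp k (ENNReal.ofReal q) (volume.restrict X))
    (δ : ℝ) (hδ : 0 < δ) :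
    FullAreaDensityAt
      {x : ℂ | (∫ z in X, ‖x - x₀‖ ^ q * ‖k z‖ ^ q / ‖z - x‖ ^ q) < δ} x₀ := by
  have hq0 : 0 < q := lt_trans one_pos hq1
  have hXm : MeasurableSet X := hX.isClosed.measurableSet
  set E : Set ℂ := {x : ℂ | (∫ z in X, ‖x - x₀‖ ^ q * ‖k z‖ ^ q / ‖z - x‖ ^ q) < δ} with hE
  -- measurability of k
  have hk_ind : X.indicator k = k := by
    funext z
    by_cases h : z ∈ X
    · simp [Set.indicator_of_mem h]
    · simp [Set.indicator_of_notMem h, hk0 z h]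
  have hkm : AEStronglyMeasurable k (volume : Measure ℂ) := by
    rw [← hk_ind]
    exact (aestronglyMeasurable_indicator_iff hXm).2 hkLq.1
  obtain ⟨k', hk'sm, hkk'⟩ := hkm
  have hk'm : Measurable k' := hk'sm.measurable
  set g : ℂ → ℝ≥0∞ := fun z => ENNReal.ofReal (‖k z‖ ^ q) with hg
  set g' : ℂ → ℝ≥0∞ := fun z => ENNReal.ofReal (‖k' z‖ ^ q) with hg'
  have hrpow_cont : Continuous fun t : ℝ => t ^ q := Real.continuous_rpow_const hq0.le
  have hg'm : Measurable g' :=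
    ENNReal.measurable_ofReal.comp (hrpow_cont.measurable.comp hk'm.norm)
  have hgg' : g =ᵐ[volume] g' := hkk'.mono fun z hz => by simp only [hg, hg', hz]
  have haeX : ∀ᵐ z ∂(volume.restrict X), k z = k' z := ae_restrict_of_ae hkk'
  have hggX : g =ᵐ[volume.restrict X] g' := ae_restrict_of_ae hgg'
  have hgm : AEMeasurable g (volume.restrict X) := hg'm.aemeasurable.congr hggX.symm
  -- finiteness of ∫ g over X
  have hgint : (∫⁻ z in X, g z) ≠ ⊤ := by
    have hp0 : (ENNReal.ofReal q) ≠ 0 := by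
      simp [ENNReal.ofReal_eq_zero, not_le, hq0]
    have hsn := hkLq.2
    rw [eLpNorm_eq_lintegral_rpow_enorm_toReal hp0 ENNReal.ofReal_ne_top] at hsn
    rw [ENNReal.toReal_ofReal hq0.le] at hsn
    have h2 : (∫⁻ z in X, (‖k z‖₊ : ℝ≥0∞) ^ q) < ⊤ :=
      (ENNReal.rpow_lt_top_iff_of_pos (x := ∫⁻ z in X, (‖k z‖₊ : ℝ≥0∞) ^ q)
        (by positivity : (0:ℝ) < 1/q)).1 hsn
    have heq : ∀ z : ℂ, g z = (‖k z‖₊ : ℝ≥0∞) ^ q := by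
      intro z
      show ENNReal.ofReal (‖k z‖ ^ q) = (‖k z‖₊ : ℝ≥0∞) ^ q
      rw [show ((‖k z‖₊ : ℝ≥0∞)) = ENNReal.ofReal ‖k z‖ from (ofReal_norm (k z)).symm, ← ENNReal.ofReal_rpow_of_nonneg (norm_nonneg _) hq0.le]
    rw [lintegral_congr heq]
    exact h2.ne
  have hpi : ((NNReal.pi : ℝ≥0∞)) = ENNReal.ofReal Real.pi := by
    rw [← ENNReal.ofReal_coe_nnreal, NNReal.coe_real_pi]
  set A₀ : ℝ := Real.pi * 2 ^ q / (1 - 2 ^ (q - 2)) with hA₀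
  have hρ1 : (2:ℝ) ^ (q - 2) < 1 := by
    calc (2:ℝ) ^ (q - 2) < 2 ^ (0:ℝ) := by
          apply Real.rpow_lt_rpow_left_iff (x := 2) (by norm_num) |>.2; linarith
      _ = 1 := Real.rpow_zero 2
  have hA₀pos : 0 < A₀ := by
    apply div_pos (by positivity) (by linarith)
  set c₁ : ℝ≥0∞ := ENNReal.ofReal (A₀ * 3 ^ (2 - q) / Real.pi) with hc₁
  set c₂ : ℝ≥0∞ := ENNReal.ofReal (2 ^ q) with hc₂
  set δ' : ℝ≥0∞ := ENNReal.ofReal δ with hδ'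
  have hδ'0 : δ' ≠ 0 := (ENNReal.ofReal_pos.2 hδ).ne'
  have hδ't : δ' ≠ ⊤ := ENNReal.ofReal_ne_top
  set η₁ : ℝ → ℝ≥0∞ := fun r => ∫⁻ z in X, (closedBall x₀ (2*r)).indicator g z with hη₁
  set η₂ : ℝ → ℝ≥0∞ := fun r =>
    ∫⁻ z in X, min 1 (ENNReal.ofReal (r ^ q) * (ENNReal.ofReal (‖z - x₀‖ ^ q))⁻¹) * g z with hη₂
  have hne : ∀ᵐ z ∂(volume.restrict X), z ≠ x₀ := by
    refine ae_restrict_of_ae ?_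
    rw [ae_iff]
    have hset : {a : ℂ | ¬ a ≠ x₀} = {x₀} := by ext a; simp
    rw [hset]
    exact measure_singleton x₀
  have main : ∀ r : ℝ, 0 < r →
      volume (ball x₀ r \ E) / volume (ball x₀ r)
        ≤ δ'⁻¹ * (c₁ * η₁ r + c₂ * η₂ r) := by
    intro r hr
    set V : ℝ≥0∞ := volume (ball x₀ r) with hVdef
    have hVval : V = ENNReal.ofReal (Real.pi * r^2) := by
      rw [hVdef, Complex.volume_ball, hpi, ← ENNReal.ofReal_pow hr.le,
        ← ENNReal.ofReal_mul (by positivity), mul_comm]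
    have hV0 : V ≠ 0 := by
      rw [hVval]; exact (ENNReal.ofReal_pos.2 (by positivity)).ne'
    have hVt : V ≠ ⊤ := by rw [hVval]; exact ENNReal.ofReal_ne_top
    have hJeq : ∀ x : ℂ,
        (∫⁻ z in X, ENNReal.ofReal (‖x - x₀‖ ^ q * ‖k z‖ ^ q / ‖z - x‖ ^ q))
          = ∫⁻ z in X, ENNReal.ofReal (‖x - x₀‖ ^ q * ‖k' z‖ ^ q / ‖z - x‖ ^ q) :=
      fun x => lintegral_congr_ae (haeX.mono fun z hz => by simp only [hz])
    have hSsub : (ball x₀ r \ E) ⊆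
        {x : ℂ | δ' ≤ ∫⁻ z in X, ENNReal.ofReal (‖x - x₀‖ ^ q * ‖k' z‖ ^ q / ‖z - x‖ ^ q)} := by
      intro x hx
      have hxE : δ ≤ ∫ z in X, ‖x - x₀‖ ^ q * ‖k z‖ ^ q / ‖z - x‖ ^ q := by
        have h2 := hx.2
        rw [hE, Set.mem_setOf_eq, not_lt] at h2
        exact h2
      by_cases hi : Integrable (fun z => ‖x - x₀‖ ^ q * ‖k z‖ ^ q / ‖z - x‖ ^ q)
          (volume.restrict X)
      · have hnn : 0 ≤ᵐ[volume.restrict X]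
            fun z => ‖x - x₀‖ ^ q * ‖k z‖ ^ q / ‖z - x‖ ^ q :=
          Eventually.of_forall fun z => by positivity
        have heq := ofReal_integral_eq_lintegral_ofReal hi hnn
        have hle : δ' ≤ ENNReal.ofReal (∫ z in X, ‖x - x₀‖ ^ q * ‖k z‖ ^ q / ‖z - x‖ ^ q) :=
          ENNReal.ofReal_le_ofReal hxE
        rw [heq] at hle
        rw [Set.mem_setOf_eq, ← hJeq x]
        exact hle
      · rw [integral_undef hi] at hxE; linarith
    have hmb : Measurable fun p : ℂ × ℂ =>
        ENNReal.ofReal (‖p.1 - x₀‖ ^ q * ‖k' p.2‖ ^ q / ‖p.2 - p.1‖ ^ q) := by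
      apply ENNReal.measurable_ofReal.comp
      apply Measurable.div
      · exact ((hrpow_cont.comp ((continuous_fst.sub continuous_const).norm)).measurable).mul
          (hrpow_cont.measurable.comp (hk'm.norm.comp measurable_snd))
      · exact (hrpow_cont.comp ((continuous_snd.sub continuous_fst).norm)).measurable
    have hMarkov : δ' * volume (ball x₀ r \ E)
        ≤ ∫⁻ x in ball x₀ r, ∫⁻ z in X,
            ENNReal.ofReal (‖x - x₀‖ ^ q * ‖k' z‖ ^ q / ‖z - x‖ ^ q) := by
      have hJ'm : Measurable fun x : ℂ =>
          ∫⁻ z in X, ENNReal.ofReal (‖x - x₀‖ ^ q * ‖k' z‖ ^ q / ‖z - x‖ ^ q) :=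
        hmb.lintegral_prod_right'
      have h1 : volume (ball x₀ r \ E) ≤ (volume.restrict (ball x₀ r))
          {x : ℂ | δ' ≤ ∫⁻ z in X, ENNReal.ofReal (‖x - x₀‖ ^ q * ‖k' z‖ ^ q / ‖z - x‖ ^ q)} := by
        rw [Measure.restrict_apply' measurableSet_ball]
        exact measure_mono (Set.subset_inter hSsub Set.diff_subset)
      calc δ' * volume (ball x₀ r \ E)
          ≤ δ' * (volume.restrict (ball x₀ r))
            {x : ℂ | δ' ≤ ∫⁻ z in X, ENNReal.ofReal (‖x - x₀‖ ^ q * ‖k' z‖ ^ q / ‖z - x‖ ^ q)} :=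
            mul_le_mul_right h1 _
        _ ≤ _ := mul_meas_ge_le_lintegral₀ hJ'm.aemeasurable δ'
    have hswap := lintegral_lintegral_swap (μ := volume.restrict (ball x₀ r))
      (ν := volume.restrict X)
      (f := fun x z => ENNReal.ofReal (‖x - x₀‖ ^ q * ‖k' z‖ ^ q / ‖z - x‖ ^ q))
      hmb.aemeasurable
    -- pointwise-in-z bound of the inner integral
    have hzb : ∀ z : ℂ,
        (∫⁻ x in ball x₀ r, ENNReal.ofReal (‖x - x₀‖ ^ q * ‖k' z‖ ^ q / ‖z - x‖ ^ q))
          ≤ ENNReal.ofReal (r ^ q) * ENNReal.ofReal (A₀ * (3*r) ^ (2 - q)) *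
              (closedBall x₀ (2*r)).indicator g' z
            + V * c₂ * (min 1 (ENNReal.ofReal (r ^ q) * (ENNReal.ofReal (‖z - x₀‖ ^ q))⁻¹)
                * g' z) := by
      intro z
      by_cases hz : z ∈ closedBall x₀ (2*r)
      · -- near part
        have hptw : ∀ x ∈ ball x₀ r,
            ENNReal.ofReal (‖x - x₀‖ ^ q * ‖k' z‖ ^ q / ‖z - x‖ ^ q)
              ≤ (ENNReal.ofReal (r ^ q) * g' z) * (ENNReal.ofReal (‖z - x‖ ^ q))⁻¹ := by
          intro x hx
          have hxr : ‖x - x₀‖ ≤ r := by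
            rw [← dist_eq_norm]; exact (mem_ball.1 hx).le
          have h1 : ‖x - x₀‖ ^ q ≤ r ^ q := Real.rpow_le_rpow (norm_nonneg _) hxr hq0.le
          have hinv : ENNReal.ofReal ((‖z - x‖ ^ q)⁻¹) ≤ (ENNReal.ofReal (‖z - x‖ ^ q))⁻¹ := by
            rcases eq_or_lt_of_le (Real.rpow_nonneg (norm_nonneg (z - x)) q) with h | h
            · rw [← h]; simp
            · exact le_of_eq (ENNReal.ofReal_inv_of_pos h)
          calc ENNReal.ofReal (‖x - x₀‖ ^ q * ‖k' z‖ ^ q / ‖z - x‖ ^ q)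
              = ENNReal.ofReal ((‖x - x₀‖ ^ q * ‖k' z‖ ^ q) * (‖z - x‖ ^ q)⁻¹) := by
                rw [div_eq_mul_inv]
            _ ≤ ENNReal.ofReal ((r ^ q * ‖k' z‖ ^ q) * (‖z - x‖ ^ q)⁻¹) := by
                apply ENNReal.ofReal_le_ofReal
                have hb : (0:ℝ) ≤ ‖k' z‖ ^ q := Real.rpow_nonneg (norm_nonneg _) q
                have hc : (0:ℝ) ≤ (‖z - x‖ ^ q)⁻¹ := by positivity
                exact mul_le_mul_of_nonneg_right (mul_le_mul_of_nonneg_right h1 hb) hc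
            _ = (ENNReal.ofReal (r ^ q) * g' z) * ENNReal.ofReal ((‖z - x‖ ^ q)⁻¹) := by
                rw [ENNReal.ofReal_mul (by positivity), ENNReal.ofReal_mul (by positivity)]
            _ ≤ (ENNReal.ofReal (r ^ q) * g' z) * (ENNReal.ofReal (‖z - x‖ ^ q))⁻¹ :=
                mul_le_mul_right hinv _
        have hsub : ball x₀ r ⊆ ball z (3*r) := by
          intro x hx
          rw [mem_ball] at hx ⊢
          have h1 : dist x z ≤ dist x x₀ + dist x₀ z := dist_triangle _ _ _
          have h2 : dist x₀ z ≤ 2*r := by rw [dist_comm]; exact mem_closedBall.1 hz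
          linarith
        have hmeas2 : Measurable fun x : ℂ =>
            (ENNReal.ofReal (r ^ q) * g' z) * (ENNReal.ofReal (‖z - x‖ ^ q))⁻¹ := by
          apply Measurable.const_mul
          exact (ENNReal.measurable_ofReal.comp
            (hrpow_cont.comp ((continuous_const.sub continuous_id).norm)).measurable).inv
        calc (∫⁻ x in ball x₀ r, ENNReal.ofReal (‖x - x₀‖ ^ q * ‖k' z‖ ^ q / ‖z - x‖ ^ q))
            ≤ ∫⁻ x in ball x₀ r,
                (ENNReal.ofReal (r ^ q) * g' z) * (ENNReal.ofReal (‖z - x‖ ^ q))⁻¹ :=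
              setLIntegral_mono hmeas2 hptw
          _ = (ENNReal.ofReal (r ^ q) * g' z) *
                ∫⁻ x in ball x₀ r, (ENNReal.ofReal (‖z - x‖ ^ q))⁻¹ :=
              lintegral_const_mul' _ _ (ENNReal.mul_ne_top ENNReal.ofReal_ne_top
                ENNReal.ofReal_ne_top)
          _ ≤ (ENNReal.ofReal (r ^ q) * g' z) *
                ∫⁻ x in ball z (3*r), (ENNReal.ofReal (‖z - x‖ ^ q))⁻¹ :=
              mul_le_mul_right (lintegral_mono_set hsub) _
          _ ≤ (ENNReal.ofReal (r ^ q) * g' z) * ENNReal.ofReal (A₀ * (3*r) ^ (2 - q)) :=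
              mul_le_mul_right (pot_bound hq0 hq2 z (by linarith)) _
          _ = ENNReal.ofReal (r ^ q) * ENNReal.ofReal (A₀ * (3*r) ^ (2 - q)) *
                (closedBall x₀ (2*r)).indicator g' z := by
              rw [Set.indicator_of_mem hz]; ring
          _ ≤ _ := le_self_add
      · -- far part
        have hz' : 2*r < ‖z - x₀‖ := by
          have := hz
          rw [mem_closedBall, not_le, dist_eq_norm] at this
          exact this
        have hzpos : (0:ℝ) < ‖z - x₀‖ := by linarith
        have hNpos : (0:ℝ) < ‖z - x₀‖ ^ q := Real.rpow_pos_of_pos hzpos q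
        have h2q : (0:ℝ) < 2 ^ q := Real.rpow_pos_of_pos two_pos q
        have hptw : ∀ x ∈ ball x₀ r,
            ENNReal.ofReal (‖x - x₀‖ ^ q * ‖k' z‖ ^ q / ‖z - x‖ ^ q)
              ≤ c₂ * (min 1 (ENNReal.ofReal (r ^ q) * (ENNReal.ofReal (‖z - x₀‖ ^ q))⁻¹)
                  * g' z) := by
          intro x hx
          have hxr : ‖x - x₀‖ ≤ r := by
            rw [← dist_eq_norm]; exact (mem_ball.1 hx).le
          have hlow : ‖z - x₀‖/2 ≤ ‖z - x‖ := by
            have h1 : ‖z - x₀‖ - ‖x - x₀‖ ≤ ‖z - x‖ := by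
              have h2 := norm_sub_norm_le (z - x₀) (x - x₀)
              have h3 : (z - x₀) - (x - x₀) = z - x := by ring
              rw [h3] at h2
              exact h2
            linarith
          have hlowq : (‖z - x₀‖/2) ^ q ≤ ‖z - x‖ ^ q :=
            Real.rpow_le_rpow (by positivity) hlow hq0.le
          have hreal : ‖x - x₀‖ ^ q * ‖k' z‖ ^ q / ‖z - x‖ ^ q
              ≤ 2 ^ q * ((r ^ q / ‖z - x₀‖ ^ q) * ‖k' z‖ ^ q) := by
            have hdp : (0:ℝ) < (‖z - x₀‖/2) ^ q := Real.rpow_pos_of_pos (by positivity) q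
            have hstep : ‖x - x₀‖ ^ q * ‖k' z‖ ^ q / ‖z - x‖ ^ q
                ≤ r ^ q * ‖k' z‖ ^ q / ((‖z - x₀‖/2) ^ q) := by
              apply div_le_div₀ (by positivity) ?_ hdp hlowq
              exact mul_le_mul_of_nonneg_right
                (Real.rpow_le_rpow (norm_nonneg _) hxr hq0.le)
                (Real.rpow_nonneg (norm_nonneg _) q)
            have hdiv : (‖z - x₀‖/2) ^ q = ‖z - x₀‖ ^ q / 2 ^ q :=
              Real.div_rpow hzpos.le two_pos.le q
            rw [hdiv] at hstep
            refine hstep.trans (le_of_eq ?_)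
            field_simp
          calc ENNReal.ofReal (‖x - x₀‖ ^ q * ‖k' z‖ ^ q / ‖z - x‖ ^ q)
              ≤ ENNReal.ofReal (2 ^ q * ((r ^ q / ‖z - x₀‖ ^ q) * ‖k' z‖ ^ q)) :=
                ENNReal.ofReal_le_ofReal hreal
            _ = c₂ * (ENNReal.ofReal (r ^ q / ‖z - x₀‖ ^ q) * g' z) := by
                rw [ENNReal.ofReal_mul (by positivity), ENNReal.ofReal_mul (by positivity)]
            _ ≤ c₂ * (min 1 (ENNReal.ofReal (r ^ q) * (ENNReal.ofReal (‖z - x₀‖ ^ q))⁻¹)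
                  * g' z) := by
                apply mul_le_mul_right
                apply mul_le_mul_left
                refine le_min ?_ ?_
                · rw [ENNReal.ofReal_le_one]
                  rw [div_le_one hNpos]
                  exact Real.rpow_le_rpow hr.le (by linarith) hq0.le
                · rw [ENNReal.ofReal_div_of_pos hNpos, div_eq_mul_inv]
        calc (∫⁻ x in ball x₀ r, ENNReal.ofReal (‖x - x₀‖ ^ q * ‖k' z‖ ^ q / ‖z - x‖ ^ q))
            ≤ ∫⁻ _x in ball x₀ r,
                c₂ * (min 1 (ENNReal.ofReal (r ^ q) * (ENNReal.ofReal (‖z - x₀‖ ^ q))⁻¹)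
                  * g' z) := setLIntegral_mono measurable_const hptw
          _ = c₂ * (min 1 (ENNReal.ofReal (r ^ q) * (ENNReal.ofReal (‖z - x₀‖ ^ q))⁻¹)
                  * g' z) * V := setLIntegral_const _ _
          _ = V * c₂ * (min 1 (ENNReal.ofReal (r ^ q) * (ENNReal.ofReal (‖z - x₀‖ ^ q))⁻¹)
                  * g' z) := by ring
          _ ≤ _ := le_add_self
    -- integrate the z-bound
    have hη₁' : (∫⁻ z in X, (closedBall x₀ (2*r)).indicator g' z) = η₁ r := by
      rw [hη₁]
      refine lintegral_congr_ae (hggX.mono fun z hz => ?_)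
      by_cases h : z ∈ closedBall x₀ (2*r)
      · simp [Set.indicator_of_mem h, hz]
      · simp [Set.indicator_of_notMem h]
    have hη₂' : (∫⁻ z in X, min 1 (ENNReal.ofReal (r ^ q) * (ENNReal.ofReal (‖z - x₀‖ ^ q))⁻¹)
          * g' z) = η₂ r := by
      rw [hη₂]
      refine lintegral_congr_ae (hggX.mono fun z hz => ?_)
      simp only [hz]
    have hInt : (∫⁻ z in X, ∫⁻ x in ball x₀ r,
          ENNReal.ofReal (‖x - x₀‖ ^ q * ‖k' z‖ ^ q / ‖z - x‖ ^ q))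
        ≤ ENNReal.ofReal (r ^ q) * ENNReal.ofReal (A₀ * (3*r) ^ (2 - q)) * η₁ r
          + V * c₂ * η₂ r := by
      calc (∫⁻ z in X, ∫⁻ x in ball x₀ r,
            ENNReal.ofReal (‖x - x₀‖ ^ q * ‖k' z‖ ^ q / ‖z - x‖ ^ q))
          ≤ ∫⁻ z in X, (ENNReal.ofReal (r ^ q) * ENNReal.ofReal (A₀ * (3*r) ^ (2 - q)) *
              (closedBall x₀ (2*r)).indicator g' z
            + V * c₂ * (min 1 (ENNReal.ofReal (r ^ q) * (ENNReal.ofReal (‖z - x₀‖ ^ q))⁻¹)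
                * g' z)) := lintegral_mono hzb
        _ = (∫⁻ z in X, ENNReal.ofReal (r ^ q) * ENNReal.ofReal (A₀ * (3*r) ^ (2 - q)) *
              (closedBall x₀ (2*r)).indicator g' z)
            + ∫⁻ z in X, V * c₂ * (min 1 (ENNReal.ofReal (r ^ q) *
                (ENNReal.ofReal (‖z - x₀‖ ^ q))⁻¹) * g' z) :=
            lintegral_add_left ((hg'm.indicator measurableSet_closedBall).const_mul _) _
        _ = ENNReal.ofReal (r ^ q) * ENNReal.ofReal (A₀ * (3*r) ^ (2 - q)) *
              (∫⁻ z in X, (closedBall x₀ (2*r)).indicator g' z)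
            + V * c₂ * ∫⁻ z in X, min 1 (ENNReal.ofReal (r ^ q) *
                (ENNReal.ofReal (‖z - x₀‖ ^ q))⁻¹) * g' z := by
            rw [lintegral_const_mul' _ _ (ENNReal.mul_ne_top ENNReal.ofReal_ne_top
              ENNReal.ofReal_ne_top),
              lintegral_const_mul' _ _ (ENNReal.mul_ne_top hVt ENNReal.ofReal_ne_top)]
        _ = _ := by rw [hη₁', hη₂']
    have hTV : δ' * volume (ball x₀ r \ E)
        ≤ ENNReal.ofReal (r ^ q) * ENNReal.ofReal (A₀ * (3*r) ^ (2 - q)) * η₁ r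
          + V * c₂ * η₂ r := by
      refine hMarkov.trans (le_trans (le_of_eq ?_) hInt)
      exact hswap
    have hCN : ENNReal.ofReal (r ^ q) * ENNReal.ofReal (A₀ * (3*r) ^ (2 - q)) * V⁻¹ = c₁ := by
      rw [hVval, ← ENNReal.ofReal_inv_of_pos (by positivity),
        ← ENNReal.ofReal_mul (by positivity), ← ENNReal.ofReal_mul (by positivity), hc₁]
      congr 1
      have h3 : ((3:ℝ)*r) ^ (2-q) = 3 ^ (2-q) * r ^ (2-q) :=
        Real.mul_rpow (by norm_num) hr.le
      have hr2 : r ^ q * r ^ (2 - q) = r ^ (2:ℕ) := by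
        rw [← Real.rpow_natCast r 2, ← Real.rpow_add hr]; norm_num
      rw [h3]
      calc r ^ q * (A₀ * (3 ^ (2-q) * r ^ (2-q))) * (Real.pi * r^2)⁻¹
          = (A₀ * 3 ^ (2-q)) * (r ^ q * r ^ (2-q)) * (Real.pi * r^2)⁻¹ := by ring
        _ = (A₀ * 3 ^ (2-q)) * r ^ (2:ℕ) * (Real.pi * r^2)⁻¹ := by rw [hr2]
        _ = A₀ * 3 ^ (2-q) / Real.pi := by
            field_simp
    have hVV : V * c₂ * η₂ r * V⁻¹ = c₂ * η₂ r := by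
      rw [show V * c₂ * η₂ r * V⁻¹ = c₂ * η₂ r * (V * V⁻¹) by ring,
        ENNReal.mul_inv_cancel hV0 hVt, mul_one]
    calc volume (ball x₀ r \ E) / V
        ≤ (δ'⁻¹ * (ENNReal.ofReal (r ^ q) * ENNReal.ofReal (A₀ * (3*r) ^ (2 - q)) * η₁ r
            + V * c₂ * η₂ r)) / V := by
          apply ENNReal.div_le_div_right
          calc volume (ball x₀ r \ E)
              = δ'⁻¹ * (δ' * volume (ball x₀ r \ E)) := by
                rw [← mul_assoc, ENNReal.inv_mul_cancel hδ'0 hδ't, one_mul]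
            _ ≤ δ'⁻¹ * (ENNReal.ofReal (r ^ q) * ENNReal.ofReal (A₀ * (3*r) ^ (2 - q)) * η₁ r
                + V * c₂ * η₂ r) := mul_le_mul_right hTV _
      _ = δ'⁻¹ * ((ENNReal.ofReal (r ^ q) * ENNReal.ofReal (A₀ * (3*r) ^ (2 - q)) * V⁻¹)
            * η₁ r + V * c₂ * η₂ r * V⁻¹) := by
          rw [div_eq_mul_inv]; ring
      _ = δ'⁻¹ * (c₁ * η₁ r + c₂ * η₂ r) := by rw [hCN, hVV]
  have ha : Tendsto (fun n : ℕ => η₁ (1/(n:ℝ))) atTop (nhds 0) := by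
    simp only [hη₁]
    have hlim := tendsto_lintegral_of_dominated_convergence' (μ := volume.restrict X)
      (F := fun (n : ℕ) (z : ℂ) => (closedBall x₀ (2*(1/(n:ℝ)))).indicator g z)
      (f := fun _ => 0) (bound := g)
      (fun n => hgm.indicator measurableSet_closedBall)
      (fun n => Eventually.of_forall fun z => Set.indicator_le_self _ _ z)
      hgint ?_
    · simpa using hlim
    · filter_upwards [hne] with z hz
      have hd : 0 < dist z x₀ := dist_pos.2 hz
      have h2 : Tendsto (fun n : ℕ => 2*(1/(n:ℝ))) atTop (nhds 0) := by
        have := tendsto_one_div_atTop_nhds_zero_nat.const_mul (2:ℝ)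
        simpa using this
      have h3 : ∀ᶠ n : ℕ in atTop, 2*(1/(n:ℝ)) < dist z x₀ :=
        h2.eventually (eventually_lt_nhds hd)
      refine Tendsto.congr' ?_ (tendsto_const_nhds (x := (0:ℝ≥0∞)))
      filter_upwards [h3] with n hn
      rw [Set.indicator_of_notMem]
      intro hmem
      exact absurd (mem_closedBall.1 hmem) (not_le.2 hn)
  have hb : Tendsto (fun n : ℕ => η₂ (1/(n:ℝ))) atTop (nhds 0) := by
    simp only [hη₂]
    have hlim := tendsto_lintegral_of_dominated_convergence' (μ := volume.restrict X)
      (F := fun (n : ℕ) (z : ℂ) => min 1 (ENNReal.ofReal ((1/(n:ℝ)) ^ q) *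
        (ENNReal.ofReal (‖z - x₀‖ ^ q))⁻¹) * g z)
      (f := fun _ => 0) (bound := g) ?_ ?_ hgint ?_
    · simpa using hlim
    · intro n
      refine AEMeasurable.mul ?_ hgm
      refine (Measurable.aemeasurable ?_)
      exact measurable_const.min ((ENNReal.measurable_ofReal.comp
        (hrpow_cont.comp ((continuous_id.sub continuous_const).norm)).measurable).inv.const_mul _)
    · intro n
      refine Eventually.of_forall fun z => ?_
      calc min 1 (ENNReal.ofReal ((1/(n:ℝ)) ^ q) * (ENNReal.ofReal (‖z - x₀‖ ^ q))⁻¹) * g z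
          ≤ 1 * g z := mul_le_mul_left (min_le_left _ _) _
        _ = g z := one_mul _
    · filter_upwards [hne] with z hz
      have hzpos : (0:ℝ) < ‖z - x₀‖ := by
        rw [norm_pos_iff, sub_ne_zero]; exact hz
      have hfin : (ENNReal.ofReal (‖z - x₀‖ ^ q))⁻¹ ≠ ⊤ :=
        ENNReal.inv_ne_top.2 (ENNReal.ofReal_pos.2 (Real.rpow_pos_of_pos hzpos q)).ne'
      have h1 : Tendsto (fun n : ℕ => ENNReal.ofReal ((1/(n:ℝ)) ^ q)) atTop (nhds 0) := by
        have hr0 : Tendsto (fun n : ℕ => (1/(n:ℝ)) ^ q) atTop (nhds 0) := by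
          have := (hrpow_cont.tendsto 0).comp tendsto_one_div_atTop_nhds_zero_nat
          simpa [Function.comp_def, Real.zero_rpow hq0.ne'] using this
        have := (ENNReal.continuous_ofReal.tendsto 0).comp hr0
        simpa [Function.comp_def] using this
      have h2 : Tendsto (fun n : ℕ => ENNReal.ofReal ((1/(n:ℝ)) ^ q) *
          (ENNReal.ofReal (‖z - x₀‖ ^ q))⁻¹) atTop (nhds 0) := by
        have := ENNReal.Tendsto.mul_const h1 (Or.inr hfin)
        simpa using this
      have h3 : Tendsto (fun n : ℕ => min 1 (ENNReal.ofReal ((1/(n:ℝ)) ^ q) *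
          (ENNReal.ofReal (‖z - x₀‖ ^ q))⁻¹)) atTop (nhds 0) := by
        have := (tendsto_const_nhds (x := (1:ℝ≥0∞)) (f := atTop (α := ℕ))).min h2
        simpa using this
      have h4 := ENNReal.Tendsto.mul_const h3
        (Or.inr (ENNReal.ofReal_ne_top : g z ≠ ⊤))
      simpa using h4
  have hu : Tendsto (fun n : ℕ => δ'⁻¹ * (c₁ * η₁ (1/(n:ℝ)) + c₂ * η₂ (1/(n:ℝ)))) atTop
      (nhds 0) := by
    have h1 : Tendsto (fun n : ℕ => c₁ * η₁ (1/(n:ℝ)) + c₂ * η₂ (1/(n:ℝ))) atTop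
        (nhds (c₁ * 0 + c₂ * 0)) :=
      (ENNReal.Tendsto.const_mul ha (Or.inr ENNReal.ofReal_ne_top)).add
        (ENNReal.Tendsto.const_mul hb (Or.inr ENNReal.ofReal_ne_top))
    simp only [mul_zero, add_zero] at h1
    have h2 := ENNReal.Tendsto.const_mul h1 (Or.inr (ENNReal.inv_ne_top.2 hδ'0))
    simpa using h2
  refine tendsto_of_tendsto_of_tendsto_of_le_of_le' tendsto_const_nhds hu ?_ ?_
  · exact Eventually.of_forall fun n => zero_le
  · filter_upwards [eventually_ge_atTop 1] with n hn
    have hr : 0 < 1/(n:ℝ) := by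
      have : (1:ℝ) ≤ (n:ℝ) := by exact_mod_cast hn
      positivity
    exact main _ hr
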